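/- For d, m > 1, the Hamming graph H(d,m) is non-synchronizing: it is neither null nor complete, and its clique number equals its chromatic number. -/

import Mathlib

open SimpleGraph

/-- The Hamming graph `H(d,m)`: vertices are `d`-tuples over an `m`-set, adjacent
exactly when they differ in exactly one coordinate. -/
def hammingGraph (d m : ℕ) : SimpleGraph (Fin d → Fin m) where
  Adj x y := hammingDist x y = 1
  symm := ⟨fun x y h => (hammingDist_comm y x).trans h⟩
  loopless := ⟨fun x h => absurd ((hammingDist_self x).symm.trans h) (by norm_num)⟩

section aux

variable {d m : ℕ}

lemma hamming_coloring_valid [NeZero m] {x y : Fin d → Fin m}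
    (h : hammingDist x y = 1) : (∑ i, x i) ≠ (∑ i, y i) := by
  rw [hammingDist, Finset.card_eq_one] at h
  obtain ⟨j, hj⟩ := h
  have hxj : x j ≠ y j := by
    have : j ∈ ({j} : Finset (Fin d)) := Finset.mem_singleton_self j
    rw [← hj, Finset.mem_filter] at this
    exact this.2
  have heq : ∀ i, i ≠ j → x i = y i := by
    intro i hi
    by_contra hxy
    have : i ∈ ({j} : Finset (Fin d)) := by
      rw [← hj, Finset.mem_filter]; exact ⟨Finset.mem_univ _, hxy⟩
    exact hi (Finset.mem_singleton.mp this)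
  intro hsum
  apply hxj
  have := Finset.add_sum_erase Finset.univ x (Finset.mem_univ j)
  have h2 := Finset.add_sum_erase Finset.univ y (Finset.mem_univ j)
  have hrest : ∑ i ∈ Finset.univ.erase j, x i = ∑ i ∈ Finset.univ.erase j, y i :=
    Finset.sum_congr rfl fun i hi => heq i (Finset.ne_of_mem_erase hi)
  have : x j + ∑ i ∈ Finset.univ.erase j, x i = y j + ∑ i ∈ Finset.univ.erase j, y i := by
    rw [this, h2]; exact hsum
  rw [hrest] at this
  exact add_right_cancel this

end aux

/-- For `d, m > 1`, the Hamming graph `H(d,m)` is non-synchronizing: it is neither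
null nor complete, and its clique number equals its chromatic number. -/
theorem stmt_4 (d m : ℕ) (hd : 1 < d) (hm : 1 < m) :
    hammingGraph d m ≠ ⊥ ∧ hammingGraph d m ≠ ⊤ ∧
      ((hammingGraph d m).cliqueNum : ℕ∞) = (hammingGraph d m).chromaticNumber := by
  haveI : NeZero m := ⟨by omega⟩
  haveI : NeZero d := ⟨by omega⟩
  have h01 : (0 : Fin m) ≠ 1 := by
    simp only [ne_eq, Fin.ext_iff, Fin.val_zero, Fin.val_one', Nat.mod_eq_of_lt hm]
    omega
  -- the canonical coloring by coordinate sum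
  have col : (hammingGraph d m).Colorable m :=
    ⟨Coloring.mk (fun x => ∑ i, x i) fun h => hamming_coloring_valid h⟩
  -- the canonical clique: vary coordinate 0
  set f : Fin m → (Fin d → Fin m) := fun a i => if i = 0 then a else 0 with hf
  have hfinj : Function.Injective f := by
    intro a b hab
    have := congrFun hab (0 : Fin d)
    simpa [hf] using this
  have hadj : ∀ a b : Fin m, a ≠ b → (hammingGraph d m).Adj (f a) (f b) := by
    intro a b hab
    show hammingDist (f a) (f b) = 1
    rw [hammingDist, Finset.card_eq_one]
    refine ⟨0, ?_⟩
    ext i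
    simp only [Finset.mem_filter, Finset.mem_univ, true_and, Finset.mem_singleton, hf]
    constructor
    · intro h
      by_contra hi
      simp [hi] at h
    · intro h; subst h; simpa using hab
  have hclique : (hammingGraph d m).IsClique (Finset.univ.image f : Finset (Fin d → Fin m)) := by
    intro x hx y hy hxy
    simp only [Finset.coe_image, Set.mem_image] at hx hy
    obtain ⟨a, _, rfl⟩ := hx
    obtain ⟨b, _, rfl⟩ := hy
    exact hadj a b fun h => hxy (by rw [h])
  have hcard : (Finset.univ.image f).card = m := by
    rw [Finset.card_image_of_injective _ hfinj, Finset.card_univ, Fintype.card_fin]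
  -- clique number = m
  have h1 : m ≤ (hammingGraph d m).cliqueNum := by
    have := hclique.card_le_cliqueNum
    rwa [hcard] at this
  have h2 : (hammingGraph d m).cliqueNum ≤ m := by
    obtain ⟨s, hs⟩ := (hammingGraph d m).exists_isNClique_cliqueNum
    have := hs.1.card_le_of_colorable col
    rwa [hs.2] at this
  have hclnum : (hammingGraph d m).cliqueNum = m := le_antisymm h2 h1
  -- chromatic number = m
  have h3 : (hammingGraph d m).chromaticNumber ≤ (m : ℕ∞) := col.chromaticNumber_le
  have h4 : (m : ℕ∞) ≤ (hammingGraph d m).chromaticNumber := by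
    have := hclique.card_le_chromaticNumber
    rwa [hcard] at this
  refine ⟨?_, ?_, ?_⟩
  · intro hbot
    have := hadj 0 1 h01
    rw [hbot] at this
    exact this
  · intro htop
    have hne : (fun _ : Fin d => (0 : Fin m)) ≠ (fun _ => (1 : Fin m)) := by
      intro h
      exact h01 (congrFun h 0)
    have : (hammingGraph d m).Adj (fun _ => 0) (fun _ => 1) := by
      rw [htop]; exact hne
    have hd' : hammingDist (fun _ : Fin d => (0 : Fin m)) (fun _ => (1 : Fin m)) = d := by
      rw [hammingDist]
      have : ({i | (fun _ : Fin d => (0:Fin m)) i ≠ (fun _ => (1:Fin m)) i} : Finset (Fin d))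
          = Finset.univ := by
        ext i; simp [Finset.mem_filter]; rw [if_neg (by omega : ¬ m = 1)]; exact Finset.mem_univ i
      rw [this, Finset.card_univ, Fintype.card_fin]
    have h1 : hammingDist (fun _ : Fin d => (0:Fin m)) (fun _ => (1:Fin m)) = 1 := this
    rw [hd'] at h1
    omega
  · rw [hclnum]
    exact le_antisymm h4 h3
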